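/- Suppose vectors $v_1, \ldots, v_n \in \mathbb{R}^d$ with $n > d$ satisfy: (1) any choice of $d$ of the vectors is linearly independent, and (2) $0$ lies in the closed convex hull of $\{v_1, \ldots, v_n\}$. Then the open convex hull $\mathrm{conv}(v_1,\ldots,v_n) = \{\sum_{k=1}^n a_k v_k : a_k > 0, \sum_k a_k = 1\}$ is an open subset of $\mathbb{R}^d$ containing $0$. -/

import Mathlib

open scoped BigOperators
open Finset

section Aux

variable {d n : ℕ}

private lemma span_helper (v : Fin n → EuclideanSpace ℝ (Fin d)) {T : Finset (Fin n)}
    (hTcard : T.card = d)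
    (hTli : LinearIndependent ℝ (fun i : T => v i)) (y : EuclideanSpace ℝ (Fin d)) :
    ∃ e : Fin n → ℝ, (∀ k, k ∉ T → e k = 0) ∧ ∑ k, e k • v k = y := by
  classical
  rcases Nat.eq_zero_or_pos d with hd | hd
  · refine ⟨0, fun k _ => rfl, ?_⟩
    subst hd
    exact Subsingleton.elim _ _
  · have hTne : T.Nonempty := by
      rw [← Finset.card_pos, hTcard]; exact hd
    have : Nonempty T := hTne.to_subtype
    have hcard : Fintype.card T = Module.finrank ℝ (EuclideanSpace ℝ (Fin d)) := by
      rw [Fintype.card_coe, hTcard, finrank_euclideanSpace_fin]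
    let B := basisOfLinearIndependentOfCardEqFinrank hTli hcard
    have hB : ∀ i : T, B i = v i := fun i =>
      congrFun (coe_basisOfLinearIndependentOfCardEqFinrank hTli hcard) i
    refine ⟨fun k => if h : k ∈ T then B.repr y ⟨k, h⟩ else 0, fun k hk => dif_neg hk, ?_⟩
    rw [← Finset.sum_subset (Finset.subset_univ T)
      (by intro k _ hk; simp only [dif_neg hk, zero_smul])]
    rw [← Finset.sum_coe_sort T (fun k => (if h : k ∈ T then B.repr y ⟨k, h⟩ else 0) • v k)]
    calc ∑ i : T, (if h : (i : Fin n) ∈ T then B.repr y ⟨i, h⟩ else 0) • v i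
        = ∑ i : T, B.repr y i • B i := by
          apply Finset.sum_congr rfl; intro i _
          rw [dif_pos i.2, hB]
      _ = y := B.sum_repr y

private lemma pos_relation (hdn : d < n) (v : Fin n → EuclideanSpace ℝ (Fin d))
    (hli : ∀ s : Finset (Fin n), s.card = d → LinearIndependent ℝ (fun i : s => v i))
    (h0 : ∃ a : Fin n → ℝ, (∀ k, 0 ≤ a k) ∧ (∑ k, a k) = 1 ∧ (∑ k, a k • v k) = 0) :
    ∃ a : Fin n → ℝ, (∀ k, 0 < a k) ∧ (∑ k, a k) = 1 ∧ (∑ k, a k • v k) = 0 := by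
  classical
  obtain ⟨b, hb0, hb1, hbv⟩ := h0
  set S : Finset (Fin n) := Finset.univ.filter (fun k => 0 < b k) with hS
  have hbz : ∀ k, k ∉ S → b k = 0 := by
    intro k hk
    simp only [hS, Finset.mem_filter, Finset.mem_univ, true_and, not_lt] at hk
    exact le_antisymm hk (hb0 k)
  have hbpos : ∀ k ∈ S, 0 < b k := by
    intro k hk
    simpa only [hS, Finset.mem_filter, Finset.mem_univ, true_and] using hk
  have hScard : d ≤ S.card := by
    by_contra h
    push_neg at h
    obtain ⟨T, hST, hTcard⟩ := Finset.exists_superset_card_eq h.le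
      (by simpa [Fintype.card_fin] using hdn.le)
    have hTli := hli T hTcard
    rw [Fintype.linearIndependent_iff] at hTli
    have hsum : ∑ i : T, b i • v i = 0 := by
      rw [Finset.sum_coe_sort T (fun k => b k • v k), ← hbv]
      apply Finset.sum_subset (Finset.subset_univ T)
      intro k _ hk
      rw [hbz k (fun hkS => hk (hST hkS)), zero_smul]
    have hzero := hTli (fun i => b i) hsum
    obtain ⟨k, -, hk⟩ := Finset.exists_ne_zero_of_sum_ne_zero
      (show ∑ k, b k ≠ 0 by rw [hb1]; norm_num)
    have hkS : k ∈ S := by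
      simp only [hS, Finset.mem_filter, Finset.mem_univ, true_and]
      exact lt_of_le_of_ne (hb0 k) (Ne.symm hk)
    exact hk (hzero ⟨k, hST hkS⟩)
  obtain ⟨T, hTS, hTcard⟩ := Finset.exists_subset_card_eq hScard
  obtain ⟨e, he0, hev⟩ := span_helper v hTcard (hli T hTcard) (-∑ k ∈ Sᶜ, v k)
  obtain ⟨M, hM⟩ := Finset.exists_le (S.image fun k => -e k / b k)
  set t : ℝ := M + 1 with ht
  set w : Fin n → ℝ := fun k => if k ∈ S then e k + t * b k else 1 with hw
  have hwpos : ∀ k, 0 < w k := by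
    intro k
    by_cases hk : k ∈ S
    · have h1 : -e k / b k ≤ M := hM _ (Finset.mem_image_of_mem _ hk)
      have h2 : -e k / b k < t := lt_of_le_of_lt h1 (by rw [ht]; linarith)
      rw [div_lt_iff₀ (hbpos k hk)] at h2
      simp only [hw, if_pos hk]
      linarith
    · simp only [hw, if_neg hk]
      norm_num
  have hwe : ∀ k ∈ S, w k = e k + t * b k := fun k hk => by simp only [hw, if_pos hk]
  have hsumS_e : ∑ k ∈ S, e k • v k = -∑ k ∈ Sᶜ, v k := by
    rw [← hev]
    apply Finset.sum_subset (Finset.subset_univ S)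
    intro k _ hk
    rw [he0 k (fun hkT => hk (hTS hkT)), zero_smul]
  have hsumS_b : ∑ k ∈ S, b k • v k = 0 := by
    rw [← hbv]
    apply Finset.sum_subset (Finset.subset_univ S)
    intro k _ hk
    rw [hbz k hk, zero_smul]
  have hwv : ∑ k, w k • v k = 0 := by
    rw [← Finset.sum_compl_add_sum S (fun k => w k • v k)]
    have h1 : ∑ k ∈ Sᶜ, w k • v k = ∑ k ∈ Sᶜ, v k := by
      apply Finset.sum_congr rfl
      intro k hk
      rw [show w k = 1 by simp only [hw, if_neg (Finset.mem_compl.mp hk)], one_smul]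
    have h2 : ∑ k ∈ S, w k • v k = ∑ k ∈ S, e k • v k + t • ∑ k ∈ S, b k • v k := by
      rw [Finset.smul_sum, ← Finset.sum_add_distrib]
      apply Finset.sum_congr rfl
      intro k hk
      rw [hwe k hk, add_smul, smul_smul]
    rw [h1, h2, hsumS_e, hsumS_b, smul_zero, add_zero]
    abel
  set σ : ℝ := ∑ k, w k with hσ
  have : Nonempty (Fin n) := ⟨⟨0, lt_of_le_of_lt (Nat.zero_le d) hdn⟩⟩
  have hσpos : 0 < σ := by
    rw [hσ]
    exact Finset.sum_pos (fun k _ => hwpos k) Finset.univ_nonempty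
  refine ⟨fun k => σ⁻¹ * w k, fun k => mul_pos (inv_pos.mpr hσpos) (hwpos k), ?_, ?_⟩
  · rw [← Finset.mul_sum, ← hσ, inv_mul_cancel₀ hσpos.ne']
  · have : ∑ k, (σ⁻¹ * w k) • v k = σ⁻¹ • ∑ k, w k • v k := by
      rw [Finset.smul_sum]
      apply Finset.sum_congr rfl
      intro k _
      rw [smul_smul]
    rw [this, hwv, smul_zero]

end Aux

/-- if any `d` of the vectors `v 1, …, v n` (with `n > d`) are linearly
independent and `0` lies in the closed convex hull, then the open convex hull is an
open set containing `0`. -/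
theorem stmt_1 {d n : ℕ} (hdn : d < n)
    (v : Fin n → EuclideanSpace ℝ (Fin d))
    (hli : ∀ s : Finset (Fin n), s.card = d → LinearIndependent ℝ (fun i : s => v i))
    (h0 : ∃ a : Fin n → ℝ, (∀ k, 0 ≤ a k) ∧ (∑ k, a k) = 1 ∧ (∑ k, a k • v k) = 0) :
    IsOpen {x : EuclideanSpace ℝ (Fin d) |
        ∃ a : Fin n → ℝ, (∀ k, 0 < a k) ∧ (∑ k, a k) = 1 ∧ (∑ k, a k • v k) = x} ∧
      (0 : EuclideanSpace ℝ (Fin d)) ∈ {x : EuclideanSpace ℝ (Fin d) |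
        ∃ a : Fin n → ℝ, (∀ k, 0 < a k) ∧ (∑ k, a k) = 1 ∧ (∑ k, a k • v k) = x} := by
  classical
  obtain ⟨b, hbpos, hb1, hbv⟩ := pos_relation hdn v hli h0
  constructor
  · let E := EuclideanSpace ℝ (Fin d)
    let φ : (Fin n → ℝ) →ₗ[ℝ] E × ℝ :=
      LinearMap.prod ((Fintype.linearCombination ℝ) v)
        ((Fintype.linearCombination ℝ) (fun _ : Fin n => (1 : ℝ)))
    let φL : (Fin n → ℝ) →L[ℝ] E × ℝ := LinearMap.toContinuousLinearMap φ
    have hφ : ∀ a : Fin n → ℝ, φL a = (∑ k, a k • v k, ∑ k, a k) := by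
      intro a
      show φ a = _
      simp only [φ, LinearMap.prod_apply, Function.prod, Fintype.linearCombination_apply,
        smul_eq_mul, mul_one]
    have hsurj : Function.Surjective φL := by
      rintro ⟨y, c⟩
      obtain ⟨T, -, hTcard⟩ := Finset.exists_subset_card_eq
        (s := (Finset.univ : Finset (Fin n))) (n := d) (by simpa using hdn.le)
      obtain ⟨e, -, hev⟩ := span_helper v hTcard (hli T hTcard) y
      refine ⟨fun k => e k + (c - ∑ j, e j) * b k, ?_⟩
      rw [hφ]
      refine Prod.ext ?_ ?_
      · show ∑ k, (e k + (c - ∑ j, e j) * b k) • v k = y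
        have : ∑ k, (e k + (c - ∑ j, e j) * b k) • v k
            = ∑ k, e k • v k + (c - ∑ j, e j) • ∑ k, b k • v k := by
          rw [Finset.smul_sum, ← Finset.sum_add_distrib]
          apply Finset.sum_congr rfl
          intro k _
          rw [add_smul, smul_smul]
        rw [this, hev, hbv, smul_zero, add_zero]
      · show ∑ k, (e k + (c - ∑ j, e j) * b k) = c
        rw [Finset.sum_add_distrib, ← Finset.mul_sum, hb1, mul_one]
        ring
    have hU : IsOpen {a : Fin n → ℝ | ∀ k, 0 < a k} := by
      have : {a : Fin n → ℝ | ∀ k, 0 < a k}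
          = Set.pi Set.univ (fun _ : Fin n => Set.Ioi (0 : ℝ)) := by
        ext a
        simp [Set.mem_pi]
      rw [this]
      exact isOpen_set_pi Set.finite_univ (fun _ _ => isOpen_Ioi)
    have himg : IsOpen (φL '' {a | ∀ k, 0 < a k}) := φL.isOpenMap hsurj _ hU
    have hset : {x : E | ∃ a : Fin n → ℝ,
          (∀ k, 0 < a k) ∧ (∑ k, a k) = 1 ∧ (∑ k, a k • v k) = x}
        = (fun x : E => (x, (1 : ℝ))) ⁻¹' (φL '' {a | ∀ k, 0 < a k}) := by
      ext x
      simp only [Set.mem_setOf_eq, Set.mem_preimage, Set.mem_image]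
      constructor
      · rintro ⟨a, h1, h2, h3⟩
        exact ⟨a, h1, by rw [hφ, h2, h3]⟩
      · rintro ⟨a, h1, h2⟩
        rw [hφ] at h2
        exact ⟨a, h1, congrArg Prod.snd h2, congrArg Prod.fst h2⟩
    rw [hset]
    exact himg.preimage (continuous_id.prodMk continuous_const)
  · exact ⟨b, hbpos, hb1, hbv⟩
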